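/- Let p be a prime, m a positive integer, u = (u_0, ..., u_{p^m-1}) a vector of units in F_p, and η = (η_0, ..., η_{p^m-1}) a sequence of non-negative integers with η_0 = 0 and η_j ≤ η_{j+1} ≤ η_j + 1 for all j. Then for every t with 1 ≤ t ≤ p^m and every l ≥ 0 with l + t ≤ p^m, the t×t matrix over F_p with entries binomial(i+j-η_j, j)·u_j, for i = l, ..., l+t-1 and j = 0, ..., t-1, is invertible modulo p. -/
import Mathlib

lemma vand_range (i n j t : ℕ) (hj : j < t) :
    ∑ s ∈ Finset.range t, i.choose s * (if s ≤ j then n.choose (j - s) else 0)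
      = (i + n).choose j := by
  rw [Nat.add_choose_eq, Finset.Nat.sum_antidiagonal_eq_sum_range_succ_mk]
  rw [← Finset.sum_subset (Finset.range_subset_range.2 hj)]
  · apply Finset.sum_congr rfl
    intro s hs
    rw [Finset.mem_range, Nat.lt_succ_iff] at hs
    simp [hs]
  · intro s _ hs
    rw [Finset.mem_range, Nat.lt_succ_iff] at hs
    simp [hs]

theorem shifted_pascal_submatrix_invertible (p m : ℕ) (hp : p.Prime) (hm : 1 ≤ m)
    (u : ℕ → ZMod p) (hu : ∀ j, j < p ^ m → u j ≠ 0)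
    (η : ℕ → ℕ) (hη0 : η 0 = 0)
    (hηmono : ∀ j, j + 1 < p ^ m → η j ≤ η (j + 1) ∧ η (j + 1) ≤ η j + 1)
    (t l : ℕ) (ht : 1 ≤ t) (hlt : l + t ≤ p ^ m) :
    IsUnit (Matrix.of (fun (i j : Fin t) =>
      (if η (j : ℕ) ≤ l + (i : ℕ) + (j : ℕ) then
        (((l + (i : ℕ) + (j : ℕ) - η (j : ℕ)).choose (j : ℕ) : ℕ) : ZMod p)
      else 0) * u (j : ℕ))).det := by
  haveI : Fact p.Prime := ⟨hp⟩
  -- η j ≤ j for j < p^m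
  have hηle : ∀ j, j < p ^ m → η j ≤ j := by
    intro j
    induction j with
    | zero => intro _; simp [hη0]
    | succ k ih =>
      intro hk
      have := hηmono k hk
      exact le_trans this.2 (Nat.succ_le_succ (ih (lt_trans (Nat.lt_succ_self k) hk)))
  set P : Matrix (Fin t) (Fin t) (ZMod p) :=
    Matrix.of (fun i s : Fin t => ((i : ℕ).choose (s : ℕ) : ZMod p)) with hP
  set T : Matrix (Fin t) (Fin t) (ZMod p) :=
    Matrix.of (fun s j : Fin t =>
      (if (s : ℕ) ≤ (j : ℕ) then ((l + ((j : ℕ) - η (j : ℕ))).choose ((j : ℕ) - (s : ℕ)) : ZMod p)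
       else 0) * u (j : ℕ)) with hT
  have hfac : Matrix.of (fun (i j : Fin t) =>
      (if η (j : ℕ) ≤ l + (i : ℕ) + (j : ℕ) then
        (((l + (i : ℕ) + (j : ℕ) - η (j : ℕ)).choose (j : ℕ) : ℕ) : ZMod p)
      else 0) * u (j : ℕ)) = P * T := by
    ext i j
    have hjpm : (j : ℕ) < p ^ m := lt_of_lt_of_le j.2 (le_trans (Nat.le_add_left t l) hlt)
    have hηj : η (j : ℕ) ≤ (j : ℕ) := hηle _ hjpm
    have hcond : η (j : ℕ) ≤ l + (i : ℕ) + (j : ℕ) :=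
      le_trans hηj (Nat.le_add_left _ _)
    have hkey : l + (i : ℕ) + (j : ℕ) - η (j : ℕ)
        = (i : ℕ) + (l + ((j : ℕ) - η (j : ℕ))) := by omega
    simp only [Matrix.mul_apply, Matrix.of_apply, hcond, if_true]
    rw [hkey, ← vand_range (i : ℕ) (l + ((j : ℕ) - η (j : ℕ))) (j : ℕ) t j.2]
    push_cast
    rw [Finset.sum_mul, ← Fin.sum_univ_eq_sum_range
      (fun s => (((i : ℕ).choose s : ZMod p) * (if s ≤ (j : ℕ) then
        (((l + ((j : ℕ) - η (j : ℕ))).choose ((j : ℕ) - s) : ZMod p)) else 0)) * u (j : ℕ)) t]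
    apply Finset.sum_congr rfl
    intro s _
    exact mul_assoc _ _ _
  rw [hfac, Matrix.det_mul]
  have hdetP : P.det = 1 := by
    rw [Matrix.det_of_lowerTriangular P]
    · apply Finset.prod_eq_one
      intro i _
      simp [hP]
    · intro i s h
      simp only [hP, Matrix.of_apply]
      rw [Nat.choose_eq_zero_of_lt]
      · simp
      · exact h
  have hdetT : T.det = ∏ j : Fin t, u (j : ℕ) := by
    rw [Matrix.det_of_upperTriangular]
    · apply Finset.prod_congr rfl
      intro j _
      simp [hT]
    · intro s j h
      simp only [hT, Matrix.of_apply]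
      rw [if_neg (by exact_mod_cast Nat.not_le.2 h)]
      simp
  rw [hdetP, hdetT, one_mul]
  rw [isUnit_iff_ne_zero]
  apply Finset.prod_ne_zero_iff.2
  intro j _
  exact hu _ (lt_of_lt_of_le j.2 (le_trans (Nat.le_add_left t l) hlt))
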